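/- For any measurable f on a finite measure space (X,μ) and α > 0, with S_k = {x : 2^k ≤ |f(x)| < 2^{k+1}} for k ≥ 1: ∑_{k≥k₀} 2^{k+1} k^α μ(S_k)^{k/(k+1)} ≤ C(α,k₀) + 8 ∑_{k≥k₀} 2^k k^α μ(S_k), where C(α,k₀) = 2∑_{k≥k₀} 2^{k+1} k^α 4^{-k} < ∞, and consequently this sum is bounded by C(α,k₀) + C' ∫_X |f|(log₂⁺|f|)^α dμ for a universal constant C' depending on α. -/

import Mathlib

open MeasureTheory Filter Set Topology ENNReal

noncomputable section
namespace Paper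

variable {α : Type*} [MeasurableSpace α]

/-- The level set `S_k = {x : 2^k ≤ |f(x)| < 2^{k+1}}`. -/
def Sk (f : α → ℝ) (k : ℕ) : Set α :=
  {x | (2 : ℝ) ^ k ≤ |f x| ∧ |f x| < 2 ^ (k + 1)}

/-- The constant `C(α,k₀) = 2 ∑_{k ≥ k₀} 2^{k+1} k^α 4^{-k}`. -/
def yanoC (a : ℝ) (k₀ : ℕ) : ℝ≥0∞ :=
  2 * ∑' k : ℕ, if k₀ ≤ k then
    (2 : ℝ≥0∞) ^ (k + 1) * (k : ℝ≥0∞) ^ a * (4 : ℝ≥0∞) ^ (-(k : ℝ)) else 0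

/-- The elementary estimate in the proof of Yano's theorem:
`∑_{k≥k₀} 2^{k+1} k^α μ(S_k)^{k/(k+1)} ≤ C(α,k₀) + 8 ∑_{k≥k₀} 2^k k^α μ(S_k)`, with
`C(α,k₀) < ∞`, and consequently the sum is bounded by
`C(α,k₀) + C' ∫ |f| (log₂⁺|f|)^α dμ` for a constant `C'` depending only on `α`. -/
private lemma young_aux (k : ℕ) (m : ℝ≥0∞) (hm : m ≠ ∞) :
    m ^ ((k:ℝ)/((k:ℝ)+1)) ≤ (4:ℝ≥0∞)^(-(k:ℝ)) + 4 * m := by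
  have hk1 : (0:ℝ) < (k:ℝ) + 1 := by positivity
  have hθ : (0:ℝ) ≤ (k:ℝ)/((k:ℝ)+1) := by positivity
  set c : ℝ≥0∞ := (4:ℝ≥0∞) ^ (-((k:ℝ)+1)) with hc
  rcases le_total m c with h | h
  · refine le_trans ?_ (le_add_right le_rfl)
    calc m ^ ((k:ℝ)/((k:ℝ)+1)) ≤ c ^ ((k:ℝ)/((k:ℝ)+1)) :=
          ENNReal.rpow_le_rpow h hθ
      _ = (4:ℝ≥0∞) ^ (-((k:ℝ)+1) * ((k:ℝ)/((k:ℝ)+1))) := by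
          rw [hc, ← ENNReal.rpow_mul]
      _ = (4:ℝ≥0∞) ^ (-(k:ℝ)) := by
          congr 1; field_simp
  · refine le_trans ?_ (le_add_left le_rfl)
    have hm0 : m ≠ 0 := by
      intro h0
      rw [h0] at h
      simp [hc, ENNReal.rpow_eq_zero_iff] at h
    have key : m ^ (-(1/((k:ℝ)+1))) ≤ 4 := by
      have h1 : m ^ (-(1/((k:ℝ)+1))) ≤ c ^ (-(1/((k:ℝ)+1))) := by
        rw [ENNReal.rpow_neg, ENNReal.rpow_neg]
        exact ENNReal.inv_le_inv.mpr (ENNReal.rpow_le_rpow h (by positivity))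
      have h2 : c ^ (-(1/((k:ℝ)+1))) = 4 := by
        rw [hc, ← ENNReal.rpow_mul]
        have : -((k:ℝ)+1) * -(1/((k:ℝ)+1)) = 1 := by field_simp
        rw [this, ENNReal.rpow_one]
      rw [h2] at h1; exact h1
    calc m ^ ((k:ℝ)/((k:ℝ)+1)) = m ^ (1 + -(1/((k:ℝ)+1))) := by
          congr 1; field_simp; ring
      _ = m * m ^ (-(1/((k:ℝ)+1))) := by
          rw [ENNReal.rpow_add _ _ hm0 hm, ENNReal.rpow_one]
      _ ≤ m * 4 := mul_le_mul_right key m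
      _ = 4 * m := mul_comm _ _

open scoped NNReal in
private lemma geom_aux (n : ℕ) : ∑' k:ℕ, (k:ℝ≥0∞)^n * 2⁻¹^k < ∞ := by
  have hs : Summable (fun k : ℕ => (k:ℝ)^n * (2⁻¹:ℝ)^k) :=
    summable_pow_mul_geometric_of_norm_lt_one n (by norm_num)
  have hs' : Summable (fun k : ℕ => ((k:ℝ≥0)^n * 2⁻¹^k : ℝ≥0)) := by
    rw [← NNReal.summable_coe]
    have he : (fun k:ℕ => (((k:ℝ≥0)^n * 2⁻¹^k : ℝ≥0) : ℝ)) = fun k:ℕ => (k:ℝ)^n * 2⁻¹^k := by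
      ext k; push_cast; ring
    rw [he]; exact hs
  have := ENNReal.tsum_coe_ne_top_iff_summable.mpr hs'
  rw [lt_top_iff_ne_top]
  convert this using 2 with k
  push_cast; ring

private lemma pow4_aux (k : ℕ) :
    (2:ℝ≥0∞)^(k+1) * (4:ℝ≥0∞)^(-(k:ℝ)) = 2 * 2⁻¹^k := by
  have h4 : (4:ℝ≥0∞)^(-(k:ℝ)) = ((2:ℝ≥0∞)^k * 2^k)⁻¹ := by
    rw [ENNReal.rpow_neg, ENNReal.rpow_natCast]
    congr 1
    rw [← mul_pow]; norm_num
  rw [h4, pow_succ, ENNReal.mul_inv (by simp) (by simp)]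
  rw [ENNReal.inv_pow]
  have h2 : (2:ℝ≥0∞)^k * ((2:ℝ≥0∞)^k)⁻¹ = 1 :=
    ENNReal.mul_inv_cancel (by simp) (by simp)
  calc (2:ℝ≥0∞)^k * 2 * ((2⁻¹:ℝ≥0∞)^k * (2⁻¹:ℝ≥0∞)^k)
      = ((2:ℝ≥0∞)^k * (2⁻¹:ℝ≥0∞)^k) * (2 * 2⁻¹^k) := by ring
    _ = 2 * 2⁻¹^k := by rw [← ENNReal.inv_pow, h2, one_mul]

private lemma rpow_le_pow_aux (k n : ℕ) (a : ℝ) (hk : 1 ≤ k) (h : a ≤ n) :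
    (k:ℝ≥0∞)^a ≤ (k:ℝ≥0∞)^n := by
  rw [← ENNReal.rpow_natCast]
  exact ENNReal.rpow_le_rpow_of_exponent_le (by exact_mod_cast hk) h

private lemma integrand_aux (k : ℕ) (a : ℝ) (ha : 0 < a) (hk : 1 ≤ k) (t : ℝ)
    (ht : (2:ℝ)^k ≤ |t|) :
    (2:ℝ≥0∞)^k * (k:ℝ≥0∞)^a ≤ ENNReal.ofReal (|t| * (max 0 (Real.logb 2 |t|)) ^ a) := by
  have h2k : (0:ℝ) < 2^k := by positivity
  have ht0 : (0:ℝ) < |t| := lt_of_lt_of_le h2k ht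
  have hlog : (k:ℝ) ≤ Real.logb 2 |t| := by
    have h1 : Real.logb 2 ((2:ℝ)^k) = k := by
      rw [Real.logb_pow, Real.logb_self_eq_one (by norm_num), mul_one]
    rw [← h1]
    exact Real.logb_le_logb_of_le (by norm_num) h2k ht
  have hmax : (k:ℝ) ≤ max 0 (Real.logb 2 |t|) := le_max_of_le_right hlog
  have hreal : (2:ℝ)^k * (k:ℝ)^a ≤ |t| * (max 0 (Real.logb 2 |t|))^a := by
    apply mul_le_mul ht (Real.rpow_le_rpow (by positivity) hmax (le_of_lt ha))
      (by positivity) (le_of_lt ht0)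
  calc (2:ℝ≥0∞)^k * (k:ℝ≥0∞)^a
      = ENNReal.ofReal ((2:ℝ)^k * (k:ℝ)^a) := by
        rw [ENNReal.ofReal_mul (by positivity),
          ← ENNReal.ofReal_rpow_of_nonneg (by positivity) (le_of_lt ha)]
        congr 1
        · rw [ENNReal.ofReal_pow (by norm_num)]; norm_num
        · rw [ENNReal.ofReal_natCast]
    _ ≤ _ := ENNReal.ofReal_le_ofReal hreal

theorem stmt13 (a : ℝ) (ha : 0 < a) (k₀ : ℕ) (hk₀ : 1 ≤ k₀) :
    ∃ C' : ℝ≥0∞, C' < ∞ ∧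
      ∀ (X : Type) (_ : MeasurableSpace X) (μ : Measure X), IsFiniteMeasure μ →
        ∀ f : X → ℝ, Measurable f →
          yanoC a k₀ < ∞ ∧
          ((∑' k : ℕ, if k₀ ≤ k then
              (2 : ℝ≥0∞) ^ (k + 1) * (k : ℝ≥0∞) ^ a *
                μ (Sk f k) ^ ((k : ℝ) / ((k : ℝ) + 1)) else 0)
            ≤ yanoC a k₀ +
              8 * ∑' k : ℕ, if k₀ ≤ k then
                (2 : ℝ≥0∞) ^ k * (k : ℝ≥0∞) ^ a * μ (Sk f k) else 0) ∧
          ((∑' k : ℕ, if k₀ ≤ k then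
              (2 : ℝ≥0∞) ^ (k + 1) * (k : ℝ≥0∞) ^ a *
                μ (Sk f k) ^ ((k : ℝ) / ((k : ℝ) + 1)) else 0)
            ≤ yanoC a k₀ +
              C' * ∫⁻ x, ENNReal.ofReal (|f x| * (max 0 (Real.logb 2 |f x|)) ^ a) ∂μ) := by
  -- finiteness of the constant
  have hC : yanoC a k₀ < ∞ := by
    rw [yanoC]
    have hsum : (∑' k : ℕ, if k₀ ≤ k then
        (2 : ℝ≥0∞) ^ (k + 1) * (k : ℝ≥0∞) ^ a * (4 : ℝ≥0∞) ^ (-(k : ℝ)) else 0) < ∞ := by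
      have hle : ∀ k : ℕ, (if k₀ ≤ k then
          (2 : ℝ≥0∞) ^ (k + 1) * (k : ℝ≥0∞) ^ a * (4 : ℝ≥0∞) ^ (-(k : ℝ)) else 0)
          ≤ 2 * ((k:ℝ≥0∞)^(⌈a⌉₊) * 2⁻¹^k) := by
        intro k
        by_cases hk : k₀ ≤ k
        · simp only [hk, if_true]
          calc (2 : ℝ≥0∞) ^ (k + 1) * (k : ℝ≥0∞) ^ a * (4 : ℝ≥0∞) ^ (-(k : ℝ))
              = ((2:ℝ≥0∞)^(k+1) * (4:ℝ≥0∞)^(-(k:ℝ))) * (k:ℝ≥0∞)^a := by ring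
            _ = (2 * 2⁻¹^k) * (k:ℝ≥0∞)^a := by rw [pow4_aux]
            _ ≤ (2 * 2⁻¹^k) * (k:ℝ≥0∞)^(⌈a⌉₊) :=
                mul_le_mul_right (rpow_le_pow_aux k _ a (le_trans hk₀ hk) (Nat.le_ceil a)) _
            _ = 2 * ((k:ℝ≥0∞)^(⌈a⌉₊) * 2⁻¹^k) := by ring
        · simp [hk]
      calc (∑' k : ℕ, if k₀ ≤ k then
            (2 : ℝ≥0∞) ^ (k + 1) * (k : ℝ≥0∞) ^ a * (4 : ℝ≥0∞) ^ (-(k : ℝ)) else 0)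
          ≤ ∑' k : ℕ, 2 * ((k:ℝ≥0∞)^(⌈a⌉₊) * 2⁻¹^k) := ENNReal.tsum_le_tsum hle
        _ = 2 * ∑' k : ℕ, (k:ℝ≥0∞)^(⌈a⌉₊) * 2⁻¹^k := ENNReal.tsum_mul_left
        _ < ∞ := ENNReal.mul_lt_top (by norm_num) (geom_aux _)
    exact ENNReal.mul_lt_top (by norm_num) hsum
  refine ⟨8, by norm_num, ?_⟩
  intro X mX μ hμ f hf
  -- measurability and disjointness of the level sets
  have hSmeas : ∀ k : ℕ, MeasurableSet (Sk f k) := by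
    intro k
    have : Sk f k = {x | (2:ℝ)^k ≤ |f x|} ∩ {x | |f x| < 2^(k+1)} := by
      ext x; simp [Sk, Set.mem_setOf_eq, Set.mem_inter_iff]
    rw [this]
    exact (measurableSet_le measurable_const hf.abs).inter
      (measurableSet_lt hf.abs measurable_const)
  have hdisj : Pairwise (Function.onFun Disjoint fun k => Sk f k) := by
    have key : ∀ j k : ℕ, j < k → Disjoint (Sk f j) (Sk f k) := by
      intro j k hjk
      rw [Set.disjoint_left]
      rintro x ⟨_, hx2⟩ ⟨hx3, _⟩
      have h1 : (2:ℝ)^(j+1) ≤ 2^k := pow_le_pow_right₀ one_le_two hjk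
      linarith
    intro j k hjk
    rcases hjk.lt_or_gt with h | h
    · exact key j k h
    · exact (key k j h).symm
  -- first inequality, termwise via Young
  have hterm : ∀ k : ℕ, (if k₀ ≤ k then
      (2 : ℝ≥0∞) ^ (k + 1) * (k : ℝ≥0∞) ^ a *
        μ (Sk f k) ^ ((k : ℝ) / ((k : ℝ) + 1)) else 0)
      ≤ (if k₀ ≤ k then
          (2 : ℝ≥0∞) ^ (k + 1) * (k : ℝ≥0∞) ^ a * (4 : ℝ≥0∞) ^ (-(k : ℝ)) else 0)
        + 8 * (if k₀ ≤ k then (2 : ℝ≥0∞) ^ k * (k : ℝ≥0∞) ^ a * μ (Sk f k) else 0) := by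
    intro k
    by_cases hk : k₀ ≤ k
    · simp only [hk, if_true]
      calc (2 : ℝ≥0∞) ^ (k + 1) * (k : ℝ≥0∞) ^ a *
            μ (Sk f k) ^ ((k : ℝ) / ((k : ℝ) + 1))
          ≤ (2 : ℝ≥0∞) ^ (k + 1) * (k : ℝ≥0∞) ^ a *
            ((4:ℝ≥0∞)^(-(k:ℝ)) + 4 * μ (Sk f k)) :=
            mul_le_mul_right (young_aux k _ (measure_ne_top μ _)) _
        _ = (2 : ℝ≥0∞) ^ (k + 1) * (k : ℝ≥0∞) ^ a * (4 : ℝ≥0∞) ^ (-(k : ℝ))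
            + 8 * ((2 : ℝ≥0∞) ^ k * (k : ℝ≥0∞) ^ a * μ (Sk f k)) := by
            rw [pow_succ]; ring
    · simp [hk]
  have hineq1 : (∑' k : ℕ, if k₀ ≤ k then
      (2 : ℝ≥0∞) ^ (k + 1) * (k : ℝ≥0∞) ^ a *
        μ (Sk f k) ^ ((k : ℝ) / ((k : ℝ) + 1)) else 0)
      ≤ yanoC a k₀ +
        8 * ∑' k : ℕ, if k₀ ≤ k then
          (2 : ℝ≥0∞) ^ k * (k : ℝ≥0∞) ^ a * μ (Sk f k) else 0 := by
    calc (∑' k : ℕ, if k₀ ≤ k then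
        (2 : ℝ≥0∞) ^ (k + 1) * (k : ℝ≥0∞) ^ a *
          μ (Sk f k) ^ ((k : ℝ) / ((k : ℝ) + 1)) else 0)
        ≤ ∑' k : ℕ, ((if k₀ ≤ k then
            (2 : ℝ≥0∞) ^ (k + 1) * (k : ℝ≥0∞) ^ a * (4 : ℝ≥0∞) ^ (-(k : ℝ)) else 0)
          + 8 * (if k₀ ≤ k then (2 : ℝ≥0∞) ^ k * (k : ℝ≥0∞) ^ a * μ (Sk f k) else 0)) :=
          ENNReal.tsum_le_tsum hterm
      _ = (∑' k : ℕ, if k₀ ≤ k then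
            (2 : ℝ≥0∞) ^ (k + 1) * (k : ℝ≥0∞) ^ a * (4 : ℝ≥0∞) ^ (-(k : ℝ)) else 0)
          + ∑' k : ℕ, 8 * (if k₀ ≤ k then
            (2 : ℝ≥0∞) ^ k * (k : ℝ≥0∞) ^ a * μ (Sk f k) else 0) := ENNReal.tsum_add
      _ = (∑' k : ℕ, if k₀ ≤ k then
            (2 : ℝ≥0∞) ^ (k + 1) * (k : ℝ≥0∞) ^ a * (4 : ℝ≥0∞) ^ (-(k : ℝ)) else 0)
          + 8 * ∑' k : ℕ, (if k₀ ≤ k then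
            (2 : ℝ≥0∞) ^ k * (k : ℝ≥0∞) ^ a * μ (Sk f k) else 0) := by
          rw [ENNReal.tsum_mul_left]
      _ ≤ yanoC a k₀ +
          8 * ∑' k : ℕ, (if k₀ ≤ k then
            (2 : ℝ≥0∞) ^ k * (k : ℝ≥0∞) ^ a * μ (Sk f k) else 0) := by
          gcongr
          rw [yanoC]
          exact le_mul_of_one_le_left zero_le one_le_two
  refine ⟨hC, hineq1, ?_⟩
  -- second inequality
  refine le_trans hineq1 ?_
  gcongr
  -- ∑ w ≤ ∫ g
  calc (∑' k : ℕ, if k₀ ≤ k then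
        (2 : ℝ≥0∞) ^ k * (k : ℝ≥0∞) ^ a * μ (Sk f k) else 0)
      ≤ ∑' k : ℕ, ∫⁻ x in Sk f k,
          ENNReal.ofReal (|f x| * (max 0 (Real.logb 2 |f x|)) ^ a) ∂μ := by
        apply ENNReal.tsum_le_tsum
        intro k
        by_cases hk : k₀ ≤ k
        · simp only [hk, if_true]
          have h1 : (2 : ℝ≥0∞) ^ k * (k : ℝ≥0∞) ^ a * μ (Sk f k)
              = ∫⁻ _ in Sk f k, (2 : ℝ≥0∞) ^ k * (k : ℝ≥0∞) ^ a ∂μ := by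
            rw [setLIntegral_const]
          rw [h1]
          apply setLIntegral_mono' (hSmeas k)
          intro x hx
          exact integrand_aux k a ha (le_trans hk₀ hk) (f x) hx.1
        · simp [hk]
    _ = ∫⁻ x in ⋃ k, Sk f k,
          ENNReal.ofReal (|f x| * (max 0 (Real.logb 2 |f x|)) ^ a) ∂μ :=
        (lintegral_iUnion hSmeas hdisj _).symm
    _ ≤ ∫⁻ x, ENNReal.ofReal (|f x| * (max 0 (Real.logb 2 |f x|)) ^ a) ∂μ :=
        setLIntegral_le_lintegral _ _


end Paper
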